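/- Let (X,d) be a metric space, let f_1,…,f_N : X → X be nonexpansive maps, and let (x_n)_{n≥0} be an orbit with omega-limit set ω = ⋂_{m≥0} cl{x_n : n ≥ m}. Suppose ω is invariant, i.e. Φ(ω) = ω where Φ(S) = ⋃_{i=1}^N f_i(S). Then ω is a minimal closed invariant set: every nonempty closed set S ⊆ ω with Φ(S) ⊆ S satisfies S = ω. -/

import Mathlib

/-- The omega-limit set of a sequence: the descending intersection of the
closures of the tails of the sequence. -/
def omegaLimitSet {X : Type*} [MetricSpace X] (x : ℕ → X) : Set X :=
  ⋂ m : ℕ, closure (x '' Set.Ici m)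

/-- If the omega-limit set of an orbit of a nonexpansive IFS is
invariant, then it is a minimal closed invariant set: every nonempty closed
subinvariant subset of it equals the whole omega-limit set. -/
theorem stmt_4 {X : Type*} [MetricSpace X] {N : ℕ} (f : Fin N → X → X)
    (hf : ∀ (i : Fin N) (a b : X), dist (f i a) (f i b) ≤ dist a b)
    (x : ℕ → X) (σ : ℕ → Fin N) (hx : ∀ n : ℕ, x (n + 1) = f (σ n) (x n))
    (hinv : (⋃ i : Fin N, f i '' omegaLimitSet x) = omegaLimitSet x) :
    ∀ S : Set X, S ⊆ omegaLimitSet x → S.Nonempty → IsClosed S →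
      (⋃ i : Fin N, f i '' S) ⊆ S → S = omegaLimitSet x := by
  intro S hSsub hSne hScl hSinv
  have hmono : ∀ n, Metric.infDist (x (n + 1)) S ≤ Metric.infDist (x n) S := by
    intro n
    rw [Metric.infDist_eq_iInf (x := x n)]
    have : Nonempty S := hSne.to_subtype
    refine le_ciInf fun s => ?_
    have hfs : f (σ n) s.1 ∈ S :=
      hSinv (Set.mem_iUnion.2 ⟨σ n, Set.mem_image_of_mem _ s.2⟩)
    calc Metric.infDist (x (n + 1)) S ≤ dist (x (n + 1)) (f (σ n) s.1) :=
          Metric.infDist_le_dist_of_mem hfs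
      _ ≤ dist (x n) s.1 := by rw [hx n]; exact hf _ _ _
  have hanti : Antitone (fun n => Metric.infDist (x n) S) :=
    antitone_nat_of_succ_le hmono
  -- infDist (x n) S gets arbitrarily small for arbitrarily large n
  have hsmall : ∀ ε > 0, ∀ m : ℕ, ∃ n ≥ m, Metric.infDist (x n) S < ε := by
    intro ε hε m
    obtain ⟨s, hs⟩ := hSne
    have : s ∈ closure (x '' Set.Ici m) := by
      have := hSsub hs
      exact Set.mem_iInter.1 this m
    obtain ⟨b, ⟨n, hn, rfl⟩, hb⟩ := Metric.mem_closure_iff.1 this ε hε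
    exact ⟨n, hn, (Metric.infDist_le_dist_of_mem hs).trans_lt (by rwa [dist_comm])⟩
  refine Set.Subset.antisymm hSsub fun y hy => ?_
  rw [hScl.mem_iff_infDist_zero hSne]
  refine le_antisymm ?_ Metric.infDist_nonneg
  refine le_of_forall_pos_le_add fun ε hε => ?_
  rw [zero_add]
  refine le_of_lt ?_
  obtain ⟨n₀, -, hn₀⟩ := hsmall (ε / 2) (by linarith) 0
  have hyc : y ∈ closure (x '' Set.Ici n₀) := Set.mem_iInter.1 hy n₀
  obtain ⟨b, ⟨n, hn, rfl⟩, hb⟩ := Metric.mem_closure_iff.1 hyc (ε / 2) (by linarith)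
  calc Metric.infDist y S ≤ Metric.infDist (x n) S + dist y (x n) :=
        Metric.infDist_le_infDist_add_dist
    _ ≤ Metric.infDist (x n₀) S + dist y (x n) := by
        exact add_le_add (hanti hn) le_rfl
    _ < ε / 2 + ε / 2 := add_lt_add hn₀ hb
    _ = ε := by ring
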